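/- For every D ∈ H⁴ with Kelvin matrix 𝐃, and for all real λ, μ, the Betten determinant factorizes as 2μ · det(𝐃 − C_{λ,μ}) = (3λ + 2μ) · det(2μ·I₆ − 𝐃), where C_{λ,μ} is the Kelvin matrix of the isotropic elasticity tensor. Equivalently, the Betten polynomial B_D(λ,μ) = det(𝐃 − C_{λ,μ}) equals (3λ + 2μ)·χ_D^r(2μ), where χ_D(z) = z·χ_D^r(z) is the characteristic polynomial of 𝐃. -/
import Mathlib


open Matrix BigOperators

abbrev Mat3 := Matrix (Fin 3) (Fin 3) ℝ
abbrev T4 := Fin 3 → Fin 3 → Fin 3 → Fin 3 → ℝ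

/-- `g ∈ SO(3)`: real orthogonal 3×3 matrix of determinant 1. -/
def IsSO3 (g : Mat3) : Prop := g * gᵀ = 1 ∧ g.det = 1

/-- A harmonic fourth-order tensor: totally symmetric and traceless. -/
def IsHarm (D : T4) : Prop :=
  (∀ i j k l, D i j k l = D j i k l) ∧
  (∀ i j k l, D i j k l = D i k j l) ∧
  (∀ i j k l, D i j k l = D i j l k) ∧
  (∀ i j, ∑ k, D k k i j = 0)

/-- The action of a rotation `g` on a fourth-order tensor. -/
noncomputable def act (g : Mat3) (D : T4) : T4 := fun i j k l =>
  ∑ p, ∑ q, ∑ r, ∑ s, g i p * g j q * g k r * g l s * D p q r s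

/-- `D²`, the square of a fourth-order tensor. -/
noncomputable def sqT (D : T4) : T4 := fun i j k l => ∑ p, ∑ q, D i j p q * D p q k l

/-- `D³`, the cube of a fourth-order tensor. -/
noncomputable def cbT (D : T4) : T4 := fun i j k l => ∑ p, ∑ q, sqT D i j p q * D p q k l

/-- The second-order Boehler covariant `d₂(D) j l = ∑ᵢ (D²) i j i l`. -/
noncomputable def d2 (D : T4) : Mat3 := Matrix.of fun j l => ∑ i, sqT D i j i l

/-- The second-order covariant `d₃(D) j l = ∑ᵢ (D³) i j i l`. -/
noncomputable def d3 (D : T4) : Mat3 := Matrix.of fun j l => ∑ i, cbT D i j i l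

/-- Fundamental invariant `J₂ = tr d₂`. -/
noncomputable def J2 (D : T4) : ℝ := (d2 D).trace
/-- Fundamental invariant `J₃ = tr d₃`. -/
noncomputable def J3 (D : T4) : ℝ := (d3 D).trace
/-- Fundamental invariant `J₄ = tr(d₂²)`. -/
noncomputable def J4 (D : T4) : ℝ := (d2 D * d2 D).trace
/-- Fundamental invariant `J₅ = ∑ (d₂)ᵢⱼ D i j k l (d₂)ₖₗ`. -/
noncomputable def J5 (D : T4) : ℝ :=
  ∑ i, ∑ j, ∑ k, ∑ l, d2 D i j * D i j k l * d2 D k l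
/-- Fundamental invariant `J₆ = tr(d₂³)`. -/
noncomputable def J6 (D : T4) : ℝ := (d2 D * d2 D * d2 D).trace
/-- Fundamental invariant `J₇ = ∑ (d₂²)ᵢⱼ D i j k l (d₂)ₖₗ`. -/
noncomputable def J7 (D : T4) : ℝ :=
  ∑ i, ∑ j, ∑ k, ∑ l, (d2 D * d2 D) i j * D i j k l * d2 D k l
/-- Fundamental invariant `J₈ = ∑ (d₂²)ᵢⱼ (D²) i j k l (d₂)ₖₗ`. -/
noncomputable def J8 (D : T4) : ℝ :=
  ∑ i, ∑ j, ∑ k, ∑ l, (d2 D * d2 D) i j * sqT D i j k l * d2 D k l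
/-- Fundamental invariant `J₉ = ∑ (d₂²)ᵢⱼ D i j k l (d₂²)ₖₗ`. -/
noncomputable def J9 (D : T4) : ℝ :=
  ∑ i, ∑ j, ∑ k, ∑ l, (d2 D * d2 D) i j * D i j k l * (d2 D * d2 D) k l
/-- Fundamental invariant `J₁₀ = ∑ (d₂²)ᵢⱼ (D²) i j k l (d₂²)ₖₗ`. -/
noncomputable def J10 (D : T4) : ℝ :=
  ∑ i, ∑ j, ∑ k, ∑ l, (d2 D * d2 D) i j * sqT D i j k l * (d2 D * d2 D) k l

/-- The totally symmetric tensor whose value at `(i,j,k,l)` depends only on the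
multiset of indices `{i,j,k,l}`. -/
noncomputable def symT (f : Multiset (Fin 3) → ℝ) : T4 := fun i j k l => f {i, j, k, l}

/-- The Kelvin index pairs `p₁=(1,1), p₂=(2,2), p₃=(3,3), p₄=(2,3), p₅=(1,3), p₆=(1,2)`
(0-based). -/
def kidx : Fin 6 → Fin 3 × Fin 3 := ![(0, 0), (1, 1), (2, 2), (1, 2), (0, 2), (0, 1)]

/-- The Kelvin weights: `1` on the first three indices, `√2` on the last three. -/
noncomputable def kw : Fin 6 → ℝ := ![1, 1, 1, Real.sqrt 2, Real.sqrt 2, Real.sqrt 2]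

/-- The Kelvin (6×6) matrix of a fourth-order tensor. -/
noncomputable def kelvin (D : T4) : Matrix (Fin 6) (Fin 6) ℝ :=
  Matrix.of fun m n => kw m * kw n * D (kidx m).1 (kidx m).2 (kidx n).1 (kidx n).2

/-- The Kelvin matrix `C_{λ,μ}` of the isotropic elasticity tensor. -/
noncomputable def Ciso (lam mu : ℝ) : Matrix (Fin 6) (Fin 6) ℝ :=
  Matrix.of fun m n =>
    if m.val < 3 ∧ n.val < 3 then (if m = n then lam + 2 * mu else lam)
    else if m = n then 2 * mu else 0

noncomputable def e6 : (Fin 3 ⊕ Fin 3) ≃ Fin 6 := finSumFinEquiv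
noncomputable def vK6 : Fin 6 → ℝ := fun m => if m.val < 3 then 1 else 0
noncomputable def vvT : Matrix (Fin 6) (Fin 6) ℝ := Matrix.of fun m n => vK6 m * vK6 n

lemma det_smul_one_add_smul_vvT (t lam : ℝ) :
    (t • (1 : Matrix (Fin 6) (Fin 6) ℝ) + lam • vvT).det = t^3 * (t^2 * (t + 3*lam)) := by
  have h : (t • (1 : Matrix (Fin 6) (Fin 6) ℝ) + lam • vvT).submatrix
      e6 e6 =
      Matrix.fromBlocks
        (Matrix.of fun i j : Fin 3 => (if i = j then t else 0) + lam)
        0 0 (t • (1 : Matrix (Fin 3) (Fin 3) ℝ)) := by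
    ext i j
    rcases i with i|i <;> rcases j with j|j <;>
      simp [vvT, vK6, Matrix.one_apply, e6, finSumFinEquiv, Fin.ext_iff, i.isLt, j.isLt,
        Nat.lt_irrefl] <;> omega
  have h2 := Matrix.det_submatrix_equiv_self (R := ℝ) e6
    (t • (1 : Matrix (Fin 6) (Fin 6) ℝ) + lam • vvT)
  rw [h] at h2
  rw [← h2, Matrix.det_fromBlocks_zero₂₁, Matrix.det_smul, Matrix.det_one, Matrix.det_fin_three]
  simp
  ring

lemma eval_charpoly6 (M : Matrix (Fin 6) (Fin 6) ℝ) (t : ℝ) :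
    M.charpoly.eval t = (t • (1 : Matrix (Fin 6) (Fin 6) ℝ) - M).det := by
  rw [Matrix.charpoly, ← Polynomial.coe_evalRingHom, RingHom.map_det]
  congr 1
  ext i j
  by_cases h : i = j <;>
    simp [h, Matrix.charmatrix_apply_eq, Matrix.charmatrix_apply_ne, Matrix.one_apply,
      Matrix.sub_apply, Matrix.smul_apply]

lemma kwe : kw 0 = 1 ∧ kw 1 = 1 ∧ kw 2 = 1 ∧ kw 3 = Real.sqrt 2 ∧ kw 4 = Real.sqrt 2 ∧
    kw 5 = Real.sqrt 2 := ⟨rfl, rfl, rfl, rfl, rfl, rfl⟩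
lemma kie : kidx 0 = (0,0) ∧ kidx 1 = (1,1) ∧ kidx 2 = (2,2) ∧ kidx 3 = (1,2) ∧
    kidx 4 = (0,2) ∧ kidx 5 = (0,1) := ⟨rfl, rfl, rfl, rfl, rfl, rfl⟩
lemma fve : ((0:Fin 6):ℕ) = 0 ∧ ((1:Fin 6):ℕ) = 1 ∧ ((2:Fin 6):ℕ) = 2 ∧ ((3:Fin 6):ℕ) = 3 ∧
    ((4:Fin 6):ℕ) = 4 ∧ ((5:Fin 6):ℕ) = 5 := ⟨rfl, rfl, rfl, rfl, rfl, rfl⟩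

section Harm
variable {D : T4} (hD : IsHarm D)
include hD

lemma hswap : ∀ i j k l, D i j k l = D k l i j := fun i j k l =>
  ((((hD.2.1 i j k l).trans (hD.1 i k j l)).trans (hD.2.2.1 k i j l)).trans (hD.2.1 k i l j))

lemma htr2 : ∀ i j, ∑ k, D i j k k = 0 := by
  intro i j
  rw [Finset.sum_congr rfl fun k _ => hswap hD i j k k]
  exact hD.2.2.2 i j

lemma kelvin_mul_vvT : kelvin D * vvT = 0 := by
  ext m n
  have h := htr2 hD (kidx m).1 (kidx m).2
  rw [Fin.sum_univ_three] at h
  fin_cases n <;>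
    (try (simp [Matrix.mul_apply, Fin.sum_univ_six, kelvin, vvT, vK6, kwe.1, kwe.2.1, kwe.2.2.1, kwe.2.2.2.1, kwe.2.2.2.2.1, kwe.2.2.2.2.2, kie.1, kie.2.1, kie.2.2.1, kie.2.2.2.1, kie.2.2.2.2.1, kie.2.2.2.2.2, fve.1, fve.2.1, fve.2.2.1, fve.2.2.2.1, fve.2.2.2.2.1, fve.2.2.2.2.2]; done)) <;>
    (simp [Matrix.mul_apply, Fin.sum_univ_six, kelvin, vvT, vK6, kwe.1, kwe.2.1, kwe.2.2.1, kwe.2.2.2.1, kwe.2.2.2.2.1, kwe.2.2.2.2.2, kie.1, kie.2.1, kie.2.2.1, kie.2.2.2.1, kie.2.2.2.2.1, kie.2.2.2.2.2, fve.1, fve.2.1, fve.2.2.1, fve.2.2.2.1, fve.2.2.2.2.1, fve.2.2.2.2.2]; linear_combination kw m * h)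

lemma vvT_mul_kelvin : vvT * kelvin D = 0 := by
  ext m n
  have h := hD.2.2.2 (kidx n).1 (kidx n).2
  rw [Fin.sum_univ_three] at h
  fin_cases m <;>
    (try (simp [Matrix.mul_apply, Fin.sum_univ_six, kelvin, vvT, vK6, kwe.1, kwe.2.1, kwe.2.2.1, kwe.2.2.2.1, kwe.2.2.2.2.1, kwe.2.2.2.2.2, kie.1, kie.2.1, kie.2.2.1, kie.2.2.2.1, kie.2.2.2.2.1, kie.2.2.2.2.2, fve.1, fve.2.1, fve.2.2.1, fve.2.2.2.1, fve.2.2.2.2.1, fve.2.2.2.2.2]; done)) <;>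
    (simp [Matrix.mul_apply, Fin.sum_univ_six, kelvin, vvT, vK6, kwe.1, kwe.2.1, kwe.2.2.1, kwe.2.2.2.1, kwe.2.2.2.2.1, kwe.2.2.2.2.2, kie.1, kie.2.1, kie.2.2.1, kie.2.2.2.1, kie.2.2.2.2.1, kie.2.2.2.2.2, fve.1, fve.2.1, fve.2.2.1, fve.2.2.2.1, fve.2.2.2.2.1, fve.2.2.2.2.2]; linear_combination kw n * h)

lemma det_kelvin_zero : (kelvin D).det = 0 := by
  rw [← Matrix.exists_mulVec_eq_zero_iff]
  refine ⟨vK6, by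
    intro h0
    have := congrFun h0 0
    simp [vK6] at this, ?_⟩
  funext m
  have h := htr2 hD (kidx m).1 (kidx m).2
  rw [Fin.sum_univ_three] at h
  simp [Matrix.mulVec, dotProduct, Fin.sum_univ_six, kelvin, vK6, kwe.1, kwe.2.1, kwe.2.2.1, kwe.2.2.2.1, kwe.2.2.2.2.1, kwe.2.2.2.2.2, kie.1, kie.2.1, kie.2.2.1, kie.2.2.2.1, kie.2.2.2.2.1, kie.2.2.2.2.2, fve.1, fve.2.1, fve.2.2.1, fve.2.2.2.1, fve.2.2.2.2.1, fve.2.2.2.2.2]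
  linear_combination kw m * h

end Harm

lemma Ciso_eq (lam mu : ℝ) :
    Ciso lam mu = lam • vvT + (2*mu) • (1 : Matrix (Fin 6) (Fin 6) ℝ) := by
  ext m n
  by_cases h : m = n <;>
    simp [Ciso, vvT, vK6, Matrix.one_apply, h] <;>
  · rcases Nat.lt_or_ge m.val 3 with hm | hm <;> rcases Nat.lt_or_ge n.val 3 with hn | hn <;>
      simp [hm, hn, Nat.not_lt.mpr, Nat.not_lt] <;> omega


open Polynomial in
/-- for every `D ∈ H⁴` with Kelvin matrix `𝐃`, the Betten determinant
factorizes as `2μ · det(𝐃 − C_{λ,μ}) = (3λ + 2μ) · det(2μ·I₆ − 𝐃)`; equivalently the Betten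
polynomial equals `(3λ + 2μ)·χᵣ(2μ)` where `charpoly 𝐃 = X · χᵣ`. -/
theorem betten_factorization (D : T4) (hD : IsHarm D) :
    (∀ lam mu : ℝ,
      2 * mu * (kelvin D - Ciso lam mu).det =
        (3 * lam + 2 * mu) * ((2 * mu) • (1 : Matrix (Fin 6) (Fin 6) ℝ) - kelvin D).det) ∧
    (∃ χr : Polynomial ℝ, (kelvin D).charpoly = X * χr ∧
      ∀ lam mu : ℝ,
        (kelvin D - Ciso lam mu).det = (3 * lam + 2 * mu) * χr.eval (2 * mu)) := by
  have key : ∀ t lam : ℝ,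
      (kelvin D - t • (1 : Matrix (Fin 6) (Fin 6) ℝ)) * ((-lam) • vvT - t • 1) =
        (-t) • (kelvin D - lam • vvT - t • 1) := by
    intro t lam
    rw [sub_mul, mul_sub, mul_sub]
    simp only [Matrix.mul_smul, Matrix.smul_mul, Matrix.mul_one, Matrix.one_mul,
      kelvin_mul_vvT hD, smul_zero]
    module
  have detkey : ∀ t lam : ℝ,
      (kelvin D - t • (1 : Matrix (Fin 6) (Fin 6) ℝ)).det * (t^5 * (t + 3*lam)) =
        t^6 * (kelvin D - lam • vvT - t • 1).det := by
    intro t lam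
    have h := congrArg Matrix.det (key t lam)
    have e1 : ((kelvin D - t • (1 : Matrix (Fin 6) (Fin 6) ℝ)) *
        ((-lam) • vvT - t • 1)).det =
        (kelvin D - t • 1).det * ((-lam) • vvT - t • 1).det := by rw [Matrix.det_mul]
    have e2 : ((-t) • (kelvin D - lam • vvT - t • (1 : Matrix (Fin 6) (Fin 6) ℝ))).det =
        (-t)^6 * (kelvin D - lam • vvT - t • 1).det := by
      rw [Matrix.det_smul]; norm_num
    have e3 : ((-lam) • vvT - t • (1 : Matrix (Fin 6) (Fin 6) ℝ)).det =
        (-t)^3 * ((-t)^2 * ((-t) + 3*(-lam))) := by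
      rw [show ((-lam) • vvT - t • (1 : Matrix (Fin 6) (Fin 6) ℝ)) =
        (-t) • 1 + (-lam) • vvT by module]
      exact det_smul_one_add_smul_vvT (-t) (-lam)
    have h4 := (e1.symm.trans h).trans e2
    rw [e3] at h4
    linear_combination h4
  obtain ⟨χr, hχ⟩ : (X : Polynomial ℝ) ∣ (kelvin D).charpoly := by
    rw [Polynomial.X_dvd_iff]
    have hs := Matrix.det_eq_sign_charpoly_coeff (kelvin D)
    rw [det_kelvin_zero hD] at hs
    simpa using hs.symm
  have hA : ∀ lam : ℝ, (kelvin D - lam • vvT).charpoly = (Polynomial.C (3*lam) + X) * χr := by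
    intro lam
    apply mul_left_cancel₀ (Polynomial.X_ne_zero (R := ℝ))
    apply Polynomial.funext
    intro t
    simp only [Polynomial.eval_mul, Polynomial.eval_X, Polynomial.eval_add, Polynomial.eval_C]
    rcases eq_or_ne t 0 with rfl | ht
    · rw [zero_mul, zero_mul]
    · have h1 : (kelvin D - lam • vvT).charpoly.eval t = (kelvin D - lam • vvT - t • 1).det := by
        rw [eval_charpoly6]
        rw [show t • (1 : Matrix (Fin 6) (Fin 6) ℝ) - (kelvin D - lam • vvT) =
          -(kelvin D - lam • vvT - t • 1) by module]
        rw [Matrix.det_neg]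
        norm_num
      have h2 : (kelvin D).charpoly.eval t = (kelvin D - t • 1).det := by
        rw [eval_charpoly6]
        rw [show t • (1 : Matrix (Fin 6) (Fin 6) ℝ) - kelvin D =
          -(kelvin D - t • 1) by module]
        rw [Matrix.det_neg]
        norm_num
      have e1 : (kelvin D - t • (1 : Matrix (Fin 6) (Fin 6) ℝ)).det = t * χr.eval t := by
        rw [← h2, hχ]; simp
      have h3 := detkey t lam
      refine mul_left_cancel₀ (pow_ne_zero 5 ht) ?_
      rw [h1]
      linear_combination (-1 : ℝ) * h3 + (t^5 * (t + 3*lam)) * e1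
  have part2 : ∀ lam mu : ℝ,
      (kelvin D - Ciso lam mu).det = (3 * lam + 2 * mu) * χr.eval (2 * mu) := by
    intro lam mu
    have hsplit : kelvin D - Ciso lam mu = (kelvin D - lam • vvT) - (2*mu) • 1 := by
      rw [Ciso_eq]; module
    have h1 : (kelvin D - Ciso lam mu).det =
        (kelvin D - lam • vvT).charpoly.eval (2*mu) := by
      rw [eval_charpoly6, hsplit]
      rw [show (2*mu) • (1 : Matrix (Fin 6) (Fin 6) ℝ) - (kelvin D - lam • vvT) =
        -((kelvin D - lam • vvT) - (2*mu) • 1) by module]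
      rw [Matrix.det_neg]
      norm_num
    rw [h1, hA lam]
    simp only [Polynomial.eval_mul, Polynomial.eval_add, Polynomial.eval_C, Polynomial.eval_X]
  refine ⟨?_, χr, hχ, part2⟩
  intro lam mu
  have h2 : ((2 * mu) • (1 : Matrix (Fin 6) (Fin 6) ℝ) - kelvin D).det =
      (kelvin D).charpoly.eval (2*mu) := (eval_charpoly6 _ _).symm
  rw [h2, hχ, part2 lam mu]
  simp only [Polynomial.eval_mul, Polynomial.eval_X]
  ring
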